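/- Let n ≤ m be positive integers and let Z ∈ ℝ^{m×m} be a symmetric positive semidefinite matrix with rank(Z) ≤ n whose leading n×n principal submatrix equals the identity I_n. Then there exists a matrix V ∈ ℝ^{m×n} such that Z = VVᵀ and the top n×n block of V (its first n rows) equals I_n. -/

import Mathlib

noncomputable section
open Matrix

/-- a real symmetric positive semidefinite `m × m` matrix `Z` of rank at
most `n` whose leading `n × n` principal submatrix is the identity admits a
factorization `Z = V Vᵀ` with `V ∈ ℝ^{m×n}` whose first `n` rows form the identity. -/
theorem psd_low_rank_factorization_with_identity_block
    (n m : ℕ) (hn : 0 < n) (hnm : n ≤ m)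
    (Z : Matrix (Fin m) (Fin m) ℝ)
    (hZ : Z.PosSemidef)
    (hrank : Z.rank ≤ n)
    (hlead : Z.submatrix (Fin.castLE hnm) (Fin.castLE hnm) = (1 : Matrix (Fin n) (Fin n) ℝ)) :
    ∃ V : Matrix (Fin m) (Fin n) ℝ,
      Z = V * Vᵀ ∧
      V.submatrix (Fin.castLE hnm) id = (1 : Matrix (Fin n) (Fin n) ℝ) := by
  classical
  have hH := hZ.isHermitian
  set μ := hH.eigenvalues with hμ
  set U : Matrix (Fin m) (Fin m) ℝ := (hH.eigenvectorUnitary : Matrix (Fin m) (Fin m) ℝ) with hU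
  have hcard : Fintype.card {i // μ i ≠ 0} ≤ n := by
    have := hH.rank_eq_card_non_zero_eigs
    rw [← hμ] at this
    omega
  obtain ⟨f⟩ : Nonempty ({i // μ i ≠ 0} ↪ Fin n) :=
    Function.Embedding.nonempty_of_card_le (by simpa using hcard)
  set C : Matrix (Fin m) {i // μ i ≠ 0} ℝ :=
    fun i k => Real.sqrt (μ k) * U i k with hC
  set P : Matrix {i // μ i ≠ 0} (Fin n) ℝ :=
    fun k j => if f k = j then 1 else 0 with hP
  have hPP : P * Pᵀ = 1 := by
    ext k k'
    simp only [mul_apply, transpose_apply]; simp only [hP, ite_mul, one_mul, zero_mul, mul_ite]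
    by_cases h : k = k'
    · subst h; simp
    · rw [Finset.sum_eq_zero, one_apply_ne h]
      intro j _
      have : f k ≠ f k' := fun hc => h (f.injective hc)
      by_cases h1 : f k = j <;> by_cases h2 : f k' = j <;> simp_all
  have hCC : Z = C * Cᵀ := by
    have hspec := hH.spectral_theorem
    ext i j
    have h2 : Z i j = ∑ k : Fin m, μ k * (U i k * U j k) := by
      conv_lhs => rw [hspec, Unitary.conjStarAlgAut_apply]
      simp only [← hU, ← hμ, mul_apply, diagonal_apply, Function.comp_apply,
        RCLike.ofReal_real_eq_id, id_eq, star_apply, RCLike.star_def, conj_trivial,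
        ite_mul, zero_mul, Finset.sum_ite_eq, Finset.mem_univ, if_true]
      simp only [mul_ite, mul_zero, Finset.sum_ite_eq', Finset.mem_univ, if_true]
      exact Finset.sum_congr rfl fun k _ => by ring
    rw [h2]
    have h3 : (C * Cᵀ) i j = ∑ k : {i // μ i ≠ 0}, μ k * (U i k * U j k) := by
      simp only [mul_apply, transpose_apply]; simp only [hC]
      congr 1; ext k
      have := hZ.eigenvalues_nonneg k.1
      rw [← hμ] at this
      rw [show Real.sqrt (μ k) * U i k * (Real.sqrt (μ k) * U j k)
        = (Real.sqrt (μ k) * Real.sqrt (μ k)) * (U i k * U j k) by ring,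
        Real.mul_self_sqrt this]
    rw [h3, ← Finset.sum_subtype (Finset.univ.filter fun k => μ k ≠ 0)
      (by simp) (fun k => μ k * (U i k * U j k)), Finset.sum_filter_of_ne]
    intro k _ hk
    contrapose! hk
    simp [hk]
  set B : Matrix (Fin m) (Fin n) ℝ := C * P with hBdef
  have hZB : Z = B * Bᵀ := by
    rw [hBdef, transpose_mul, hCC, Matrix.mul_assoc, ← Matrix.mul_assoc P, hPP, Matrix.one_mul]
  set B₁ : Matrix (Fin n) (Fin n) ℝ := B.submatrix (Fin.castLE hnm) id with hB1
  have hB1B1 : B₁ * B₁ᵀ = 1 := by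
    rw [← hlead, hZB]
    ext i j
    simp [mul_apply, hB1]
  have hB1B1' : B₁ᵀ * B₁ = 1 := mul_eq_one_comm.mp hB1B1
  refine ⟨B * B₁ᵀ, ?_, ?_⟩
  · rw [transpose_mul, transpose_transpose, Matrix.mul_assoc, ← Matrix.mul_assoc B₁ᵀ, hB1B1', Matrix.one_mul, ← hZB]
  · rw [← hB1B1]
    ext i j
    simp [mul_apply, hB1]
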